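/- For n, k ≥ 1, B_{n,k} = Σ_{j≥1} [ binomial(2n, (n+1) − j(k+1)) − 2·binomial(2n, n − j(k+1)) + binomial(2n, (n−1) − j(k+1)) ], where binomial coefficients with negative lower index are zero. -/

import Mathlib

open Finset Real Filter

/-- A Dyck-path sequence `a_1, …, a_{2n}` (with `a 0 = 0` and zero padding
beyond index `2n` so that the set of such functions is finite):
`a 1 = 1`, `a (2n) = 0`, and consecutive values differ by exactly 1. -/
def IsDyckSeq (n : ℕ) (a : ℕ → ℕ) : Prop :=
  a 1 = 1 ∧ a (2*n) = 0 ∧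
  (∀ i, 1 ≤ i → i < 2*n → (a (i+1) = a i + 1 ∨ a i = a (i+1) + 1)) ∧
  a 0 = 0 ∧ ∀ i, 2*n < i → a i = 0

/-- `A n t`: number of Dyck-path sequences of semilength `n` of height at most `t`,
with the convention `A 0 t = 1`. -/
noncomputable def A (n t : ℕ) : ℕ :=
  if n = 0 then 1
  else Nat.card {a : ℕ → ℕ // IsDyckSeq n a ∧ ∀ i, a i ≤ t}

/-- `B n k`: number of Dyck-path sequences of semilength `n` of height at least `k`,
with the conventions `B 0 0 = 1`, `B 0 k = 0` for `k ≥ 1`. -/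
noncomputable def B (n k : ℕ) : ℕ :=
  if n = 0 then (if k = 0 then 1 else 0)
  else Nat.card {a : ℕ → ℕ // IsDyckSeq n a ∧ ∃ i, k ≤ a i}

/-- The `n`-th Catalan number `C_n = (1/(n+1)) * binomial(2n, n)`. -/
def C (n : ℕ) : ℕ := (2*n).choose n / (n + 1)

/-- Binomial coefficient with integer lower index, zero when negative. -/
def chooseZ (m : ℕ) (r : ℤ) : ℕ := if 0 ≤ r then m.choose r.toNat else 0

lemma chooseZ_neg (m : ℕ) {r : ℤ} (h : r < 0) : chooseZ m r = 0 := by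
  simp [chooseZ, not_le.mpr h]

lemma chooseZ_of_lt (m : ℕ) {r : ℤ} (h : (m : ℤ) < r) : chooseZ m r = 0 := by
  have h0 : (0:ℤ) ≤ r := le_of_lt (lt_of_le_of_lt (by positivity) h)
  simp only [chooseZ, if_pos h0]
  exact Nat.choose_eq_zero_of_lt (by omega)

lemma chooseZ_pascal (m : ℕ) (r : ℤ) :
    chooseZ (m+1) r = chooseZ m (r-1) + chooseZ m r := by
  rcases lt_trichotomy r 0 with h | h | h
  · rw [chooseZ_neg _ h, chooseZ_neg _ (by omega), chooseZ_neg _ h]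
  · subst h
    simp [chooseZ]
  · obtain ⟨p, rfl⟩ : ∃ p : ℕ, r = (p : ℤ) + 1 := ⟨(r-1).toNat, by omega⟩
    simp only [chooseZ, if_pos (by omega : (0:ℤ) ≤ (p:ℤ)+1), if_pos (by omega : (0:ℤ) ≤ (p:ℤ)+1-1),
      if_pos (by omega : (0:ℤ) ≤ (p:ℤ))]
    have h1 : ((p:ℤ)+1).toNat = p + 1 := by omega
    have h2 : ((p:ℤ)+1-1).toNat = p := by omega
    rw [h1, h2, Nat.choose_succ_succ']

lemma chooseZ_symm (n : ℕ) (m : ℤ) : chooseZ (2*n) ((n:ℤ) + m) = chooseZ (2*n) ((n:ℤ) - m) := by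
  have key : ∀ m : ℤ, 0 ≤ m → chooseZ (2*n) ((n:ℤ) + m) = chooseZ (2*n) ((n:ℤ) - m) := by
    intro m hm
    lift m to ℕ using hm
    by_cases hp : m ≤ n
    · have h1 : (0:ℤ) ≤ (n:ℤ) + m := by positivity
      have h2 : (0:ℤ) ≤ (n:ℤ) - m := by omega
      simp only [chooseZ, if_pos h1, if_pos h2]
      have e1 : ((n:ℤ) + m).toNat = n + m := by omega
      have e2 : ((n:ℤ) - m).toNat = n - m := by omega
      rw [e1, e2]
      rw [← Nat.choose_symm (by omega : n + m ≤ 2*n)]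
      congr 1
      omega
    · rw [chooseZ_of_lt _ (by push_cast; omega), chooseZ_neg _ (by push_cast; omega)]
  rcases le_or_gt 0 m with h | h
  · exact key m h
  · have := key (-m) (by omega)
    rw [show (n:ℤ) + -m = n - m by ring, show (n:ℤ) - -m = n + m by ring] at this
    exact this.symm

/-- Number of unconstrained ±1 walks of length `n` from `0` to `x`. -/
def W : ℕ → ℤ → ℕ
  | 0, x => if x = 0 then 1 else 0
  | (n+1), x => W n (x-1) + W n (x+1)

lemma W_eq_zero : ∀ (n : ℕ) (x : ℤ), (n:ℤ) < |x| → W n x = 0 := by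
  intro n
  induction n with
  | zero =>
      intro x hx
      have := lt_abs.mp hx
      simp only [W]
      rw [if_neg (by omega)]
  | succ n ih =>
      intro x hx
      have hd := lt_abs.mp hx
      push_cast at hd
      simp only [W]
      rw [ih (x-1) (lt_abs.mpr (by omega)), ih (x+1) (lt_abs.mpr (by omega))]

lemma W_val : ∀ (n : ℕ) (x : ℤ), (W n x : ℤ) =
    if 2 ∣ ((n:ℤ) + x) then (chooseZ n (((n:ℤ) + x)/2) : ℤ) else 0 := by
  intro n
  induction n with
  | zero =>
      intro x
      simp only [W, Nat.cast_zero, zero_add]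
      by_cases hx : x = 0
      · subst hx; simp [chooseZ]
      · rw [if_neg hx]
        by_cases he : 2 ∣ x
        · rw [if_pos he]
          obtain ⟨c, rfl⟩ := he
          have hc : c ≠ 0 := by omega
          have : (2*c)/2 = c := by omega
          rw [this]
          rcases lt_or_gt_of_ne hc with h | h
          · rw [chooseZ_neg _ h]
          · rw [chooseZ_of_lt _ (by exact_mod_cast h)]
        · rw [if_neg he]; norm_num
  | succ n ih =>
      intro x
      simp only [W, Nat.cast_add, Nat.cast_one]
      push_cast
      rw [ih (x-1), ih (x+1)]
      by_cases he : 2 ∣ ((n:ℤ) + 1 + x)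
      · rw [if_pos he]
        obtain ⟨c, hc⟩ := he
        have h1 : 2 ∣ ((n:ℤ) + (x-1)) := ⟨c-1, by omega⟩
        have h2 : 2 ∣ ((n:ℤ) + (x+1)) := ⟨c, by omega⟩
        rw [if_pos h1, if_pos h2]
        have e0 : ((n:ℤ) + 1 + x)/2 = c := by omega
        have e1 : ((n:ℤ) + (x-1))/2 = c - 1 := by omega
        have e2 : ((n:ℤ) + (x+1))/2 = c := by omega
        rw [e0, e1, e2, chooseZ_pascal]
        push_cast; ring
      · rw [if_neg he, if_neg (by omega), if_neg (by omega)]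
        norm_num

lemma W_even (n : ℕ) (c : ℤ) : (W (2*n) (2*c) : ℤ) = chooseZ (2*n) ((n:ℤ) + c) := by
  rw [W_val]
  have he : 2 ∣ (((2*n:ℕ):ℤ) + 2*c) := ⟨(n:ℤ) + c, by push_cast; ring⟩
  rw [if_pos he]
  congr 1
  have : ((2*n:ℕ):ℤ) + 2*c = 2*((n:ℤ)+c) := by push_cast; ring
  rw [this, Int.mul_ediv_cancel_left _ (by norm_num)]

/-- Number of walks of length `n` from `0` to `x` staying within `[0, t]`. -/
def Wt (t : ℕ) : ℕ → ℤ → ℕ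
  | 0, x => if x = 0 then 1 else 0
  | (n+1), x => if 0 ≤ x ∧ x ≤ (t:ℤ) then Wt t n (x-1) + Wt t n (x+1) else 0

lemma Wt_out (t : ℕ) : ∀ (n : ℕ) (x : ℤ), ¬ (0 ≤ x ∧ x ≤ (t:ℤ)) → Wt t n x = 0 := by
  intro n x hx
  match n with
  | 0 => simp only [Wt]; rw [if_neg]; intro h; subst h; exact hx ⟨le_refl _, by positivity⟩
  | (n+1) => simp only [Wt]; rw [if_neg hx]

/-- The reflection-principle formula for walks in a strip, by induction on length. -/
lemma strip (t : ℕ) : ∀ (n m : ℕ), n ≤ m → ∀ x : ℤ, 0 ≤ x → x ≤ (t:ℤ) →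
    (Wt t n x : ℤ) = ∑ j ∈ Icc (-(m:ℤ)) (m:ℤ),
      ((W n (x + 2*j*((t:ℤ)+2)) : ℤ) - (W n (2*j*((t:ℤ)+2) - 2 - x) : ℤ)) := by
  intro n
  induction n with
  | zero =>
      intro m _ x hx0 hxt
      have heval : ∀ j ∈ Icc (-(m:ℤ)) (m:ℤ),
          ((W 0 (x + 2*j*((t:ℤ)+2)) : ℤ) - (W 0 (2*j*((t:ℤ)+2) - 2 - x) : ℤ))
          = if j = 0 then (if x = 0 then (1:ℤ) else 0) else 0 := by
        intro j _
        rcases lt_trichotomy j 0 with hj | hj | hj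
        · have hb : 2*j*((t:ℤ)+2) ≤ -2*((t:ℤ)+2) := by nlinarith
          simp only [W]
          rw [if_neg (by omega), if_neg (by omega), if_neg (by omega)]
          norm_num
        · subst hj
          have e1 : x + 2*(0:ℤ)*((t:ℤ)+2) = x := by ring
          have e2 : 2*(0:ℤ)*((t:ℤ)+2) - 2 - x = -(x+2) := by ring
          rw [e1, e2]
          simp only [W]
          rw [if_neg (show ¬ -(x+2) = (0:ℤ) by omega)]
          by_cases hx : x = 0
          · subst hx; norm_num
          · rw [if_neg hx]; simp [hx]
        · have hb : 2*((t:ℤ)+2) ≤ 2*j*((t:ℤ)+2) := by nlinarith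
          simp only [W]
          rw [if_neg (by omega), if_neg (by omega), if_neg (by omega)]
          norm_num
      rw [Finset.sum_congr rfl heval, Finset.sum_ite_eq' (Icc (-(m:ℤ)) (m:ℤ)) 0
        (fun _ => if x = 0 then (1:ℤ) else 0)]
      rw [if_pos (by simp only [Finset.mem_Icc]; omega)]
      simp only [Wt]
      split <;> norm_num
  | succ n ih =>
      intro m hm x hx0 hxt
      have hm' : n ≤ m := by omega
      have hG : ∀ y : ℤ, -1 ≤ y → y ≤ (t:ℤ)+1 →
          (Wt t n y : ℤ) = ∑ j ∈ Icc (-(m:ℤ)) (m:ℤ),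
            ((W n (y + 2*j*((t:ℤ)+2)) : ℤ) - (W n (2*j*((t:ℤ)+2) - 2 - y) : ℤ)) := by
        intro y hy1 hy2
        rcases eq_or_lt_of_le hy1 with hy | hy
        · -- y = -1 : terms vanish pairwise
          rw [Wt_out t n y (by omega)]
          rw [eq_comm, Finset.sum_eq_zero]
          · norm_num
          intro j _
          have he : y + 2*j*((t:ℤ)+2) = 2*j*((t:ℤ)+2) - 2 - y := by rw [← hy]; ring
          rw [he]; ring
        · rcases eq_or_lt_of_le hy2 with hy' | hy'
          · -- y = t+1 : vanishes after reindexing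
            subst hy'
            rw [Wt_out t n ((t:ℤ)+1) (by omega)]
            have hre : ∀ j : ℤ, 2*j*((t:ℤ)+2) - 2 - ((t:ℤ)+1) = ((t:ℤ)+1) + 2*(j-1)*((t:ℤ)+2) := by
              intro j; ring
            have h1 : ∑ j ∈ Icc (-(m:ℤ)) (m:ℤ), (W n (2*j*((t:ℤ)+2) - 2 - ((t:ℤ)+1)) : ℤ)
                = ∑ j ∈ Icc (-(m:ℤ)-1) ((m:ℤ)-1), (W n (((t:ℤ)+1) + 2*j*((t:ℤ)+2)) : ℤ) := by
              rw [Finset.sum_congr rfl (fun j _ => by rw [hre j])]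
              apply Finset.sum_nbij' (fun j => j - 1) (fun j => j + 1)
              · intro a ha; simp only [Finset.mem_Icc] at *; omega
              · intro a ha; simp only [Finset.mem_Icc] at *; omega
              · intro a _; ring
              · intro a _; ring
              · intro a _; rfl
            have hz : ∀ j : ℤ, j = (m:ℤ) ∨ j = -(m:ℤ)-1 → (W n (((t:ℤ)+1) + 2*j*((t:ℤ)+2)) : ℤ) = 0 := by
              intro j hj
              have hcast : (W n (((t:ℤ)+1) + 2*j*((t:ℤ)+2)) : ℕ) = 0 := by
                apply W_eq_zero
                rcases hj with rfl | rfl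
                · rw [abs_of_nonneg (by positivity)]
                  have : (n:ℤ) ≤ (m:ℤ) := by exact_mod_cast hm'
                  nlinarith
                · rw [abs_of_nonpos (by nlinarith)]
                  have : (n:ℤ) ≤ (m:ℤ) := by exact_mod_cast hm'
                  nlinarith
              exact_mod_cast congrArg (Nat.cast : ℕ → ℤ) hcast
            rw [Finset.sum_sub_distrib, h1]
            have h2 : ∑ j ∈ Icc (-(m:ℤ)-1) ((m:ℤ)-1), (W n (((t:ℤ)+1) + 2*j*((t:ℤ)+2)) : ℤ)
                = ∑ j ∈ Icc (-(m:ℤ)) (m:ℤ), (W n (((t:ℤ)+1) + 2*j*((t:ℤ)+2)) : ℤ) := by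
              have e1 : Icc (-(m:ℤ)-1) ((m:ℤ)) = insert (-(m:ℤ)-1) (Icc (-(m:ℤ)) (m:ℤ)) := by
                ext z; simp only [Finset.mem_insert, Finset.mem_Icc]; omega
              have e2 : Icc (-(m:ℤ)-1) ((m:ℤ)) = insert ((m:ℤ)) (Icc (-(m:ℤ)-1) ((m:ℤ)-1)) := by
                ext z; simp only [Finset.mem_insert, Finset.mem_Icc]; omega
              have d1 : (-(m:ℤ)-1) ∉ Icc (-(m:ℤ)) (m:ℤ) := by simp only [Finset.mem_Icc]; omega
              have d2 : ((m:ℤ)) ∉ Icc (-(m:ℤ)-1) ((m:ℤ)-1) := by simp only [Finset.mem_Icc]; omega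
              have := (Finset.sum_insert d1 (f := fun j => (W n (((t:ℤ)+1) + 2*j*((t:ℤ)+2)) : ℤ))).symm.trans
                (by rw [← e1, e2, Finset.sum_insert d2])
              rw [hz _ (Or.inr rfl), hz _ (Or.inl rfl)] at this
              linarith
            rw [h2]
            ring
          · -- 0 ≤ y ≤ t : use IH
            exact ih m hm' y (by omega) (by omega)
      -- now the step
      have hstep : (Wt t (n+1) x : ℤ) = (Wt t n (x-1) : ℤ) + (Wt t n (x+1) : ℤ) := by
        simp only [Wt]
        rw [if_pos ⟨hx0, hxt⟩]
        push_cast; ring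
      rw [hstep, hG (x-1) (by omega) (by omega), hG (x+1) (by omega) (by omega),
        ← Finset.sum_add_distrib]
      apply Finset.sum_congr rfl
      intro j _
      simp only [W]
      have e1 : x + 2*j*((t:ℤ)+2) - 1 = (x-1) + 2*j*((t:ℤ)+2) := by ring
      have e2 : x + 2*j*((t:ℤ)+2) + 1 = (x+1) + 2*j*((t:ℤ)+2) := by ring
      have e3 : 2*j*((t:ℤ)+2) - 2 - x - 1 = 2*j*((t:ℤ)+2) - 2 - (x+1) := by ring
      have e4 : 2*j*((t:ℤ)+2) - 2 - x + 1 = 2*j*((t:ℤ)+2) - 2 - (x-1) := by ring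
      rw [e1, e2, e3, e4]
      push_cast
      ring

/-- A nonnegative walk of length `L` starting at `0`, padded with zeros. -/
def Walk (L : ℕ) (a : ℕ → ℕ) : Prop :=
  a 0 = 0 ∧ (∀ i, i < L → (a (i+1) = a i + 1 ∨ a i = a (i+1) + 1)) ∧ ∀ i, L < i → a i = 0

lemma walk_le {L : ℕ} {a : ℕ → ℕ} (h : Walk L a) : ∀ i, a i ≤ i := by
  intro i
  induction i with
  | zero => exact le_of_eq h.1
  | succ i ih =>
      rcases lt_or_ge i L with hi | hi
      · rcases h.2.1 i hi with h' | h' <;> omega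
      · rw [h.2.2 (i+1) (by omega)]; omega

lemma finite_of_walk (L : ℕ) (R : (ℕ → ℕ) → Prop) (hR : ∀ a, R a → Walk L a) :
    Finite {a : ℕ → ℕ // R a} := by
  let F : {a : ℕ → ℕ // R a} → (Fin (L+1) → Fin (L+1)) :=
    fun a i => ⟨min (a.1 i.1) L, by omega⟩
  apply Finite.of_injective F
  intro a b hab
  have key : ∀ i, a.1 i = b.1 i := by
    intro i
    rcases le_or_gt i L with hi | hi
    · have h1 := congrFun hab ⟨i, by omega⟩
      have ha := walk_le (hR _ a.2) i
      have hb := walk_le (hR _ b.2) i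
      simp only [F, Fin.mk.injEq] at h1
      omega
    · rw [(hR _ a.2).2.2 i hi, (hR _ b.2).2.2 i hi]
  exact Subtype.ext (funext key)

/-- Number of bounded nonnegative walks of length `L` from `0` to `x`. -/
noncomputable def Ncount (t L x : ℕ) : ℕ :=
  Nat.card {a : ℕ → ℕ // Walk L a ∧ a L = x ∧ ∀ i, a i ≤ t}

noncomputable def orEquiv {α : Type*} (p q : α → Prop) (h : ∀ a, p a → q a → False) :
    {a // p a ∨ q a} ≃ {a // p a} ⊕ {a // q a} := by
  classical
  exact
  { toFun := fun u => if h' : p u.1 then Sum.inl ⟨u.1, h'⟩ else Sum.inr ⟨u.1, u.2.resolve_left h'⟩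
    invFun := fun v => v.elim (fun w => ⟨w.1, Or.inl w.2⟩) (fun w => ⟨w.1, Or.inr w.2⟩)
    left_inv := fun u => by by_cases h' : p u.1 <;> simp [h']
    right_inv := fun v => by
      rcases v with w | w
      · simp only [Sum.elim_inl]
        exact dif_pos w.2
      · simp only [Sum.elim_inr]
        exact dif_neg (fun hp => h w.1 hp w.2) }

def truncF (L : ℕ) (a : ℕ → ℕ) : ℕ → ℕ := fun i => if i ≤ L then a i else 0
def extF (L x : ℕ) (b : ℕ → ℕ) : ℕ → ℕ := fun i => if i ≤ L then b i else if i = L+1 then x else 0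

def stepEquiv (t L x : ℕ) (hxt : x ≤ t) :
    {a : ℕ → ℕ // Walk (L+1) a ∧ a (L+1) = x ∧ ∀ i, a i ≤ t} ≃
    {b : ℕ → ℕ // (Walk L b ∧ b L = x + 1 ∧ ∀ i, b i ≤ t) ∨
      (Walk L b ∧ (1 ≤ x ∧ b L + 1 = x) ∧ ∀ i, b i ≤ t)} where
  toFun := fun a => ⟨truncF L a.1, by
    obtain ⟨⟨h0, hs, hz⟩, hax, hbd⟩ := a.2
    have hw : Walk L (truncF L a.1) := by
      refine ⟨?_, ?_, ?_⟩
      · simp only [truncF, if_pos (Nat.zero_le L)]; exact h0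
      · intro i hi
        simp only [truncF, if_pos (by omega : i ≤ L), if_pos (by omega : i + 1 ≤ L)]
        exact hs i (by omega)
      · intro i hi; simp only [truncF, if_neg (by omega : ¬ i ≤ L)]
    have htr : truncF L a.1 L = a.1 L := by simp only [truncF, if_pos (le_refl L)]
    have hbd' : ∀ i, truncF L a.1 i ≤ t := by
      intro i; simp only [truncF]; split
      · exact hbd i
      · exact Nat.zero_le t
    rcases hs L (by omega) with h' | h'
    · exact Or.inr ⟨hw, ⟨by omega, by omega⟩, hbd'⟩
    · exact Or.inl ⟨hw, by omega, hbd'⟩⟩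
  invFun := fun b => ⟨extF L x b.1, by
    have hbW : Walk L b.1 := by rcases b.2 with h | h <;> exact h.1
    have hbd : ∀ i, b.1 i ≤ t := by rcases b.2 with h | h <;> exact h.2.2
    have hL : b.1 L = x + 1 ∨ b.1 L + 1 = x := by
      rcases b.2 with h | h
      · exact Or.inl h.2.1
      · exact Or.inr h.2.1.2
    obtain ⟨h0, hs, hz⟩ := hbW
    refine ⟨⟨?_, ?_, ?_⟩, ?_, ?_⟩
    · simp only [extF, if_pos (Nat.zero_le L)]; exact h0
    · intro i hi
      rcases lt_or_ge i L with hiL | hiL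
      · simp only [extF, if_pos (by omega : i ≤ L), if_pos (by omega : i + 1 ≤ L)]
        exact hs i hiL
      · have hiL' : i = L := by omega
        rw [hiL']
        simp only [extF]
        rw [if_pos (le_refl L), if_neg (by omega : ¬ L + 1 ≤ L)]
        norm_num
        omega
    · intro i hi
      simp only [extF, if_neg (by omega : ¬ i ≤ L), if_neg (by omega : ¬ i = L + 1)]
    · simp only [extF]
      rw [if_neg (by omega : ¬ L + 1 ≤ L)]
      norm_num
    · intro i
      simp only [extF]
      split
      · exact hbd i
      · split
        · exact hxt
        · exact Nat.zero_le t⟩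
  left_inv := fun a => by
    obtain ⟨⟨h0, hs, hz⟩, hax, hbd⟩ := a.2
    apply Subtype.ext
    funext i
    simp only [extF, truncF]
    rcases le_or_gt i L with hi | hi
    · rw [if_pos hi, if_pos hi]
    · rw [if_neg (by omega : ¬ i ≤ L)]
      by_cases hi' : i = L + 1
      · rw [if_pos hi', hi']; exact hax.symm
      · rw [if_neg hi']; exact (hz i (by omega)).symm
  right_inv := fun b => by
    have hbW : Walk L b.1 := by rcases b.2 with h | h <;> exact h.1
    apply Subtype.ext
    funext i
    simp only [extF, truncF]
    rcases le_or_gt i L with hi | hi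
    · rw [if_pos hi, if_pos hi]
    · rw [if_neg (by omega : ¬ i ≤ L)]
      exact (hbW.2.2 i hi).symm

lemma Ncount_zero (t x : ℕ) : Ncount t 0 x = if x = 0 then 1 else 0 := by
  by_cases hx : x = 0
  · subst hx
    rw [if_pos rfl]
    have : Nonempty {a : ℕ → ℕ // Walk 0 a ∧ a 0 = 0 ∧ ∀ i, a i ≤ t} :=
      ⟨⟨fun _ => 0, ⟨rfl, fun i hi => absurd hi (by omega), fun _ _ => rfl⟩, rfl,
        fun _ => Nat.zero_le t⟩⟩
    have hsub : Subsingleton {a : ℕ → ℕ // Walk 0 a ∧ a 0 = 0 ∧ ∀ i, a i ≤ t} := by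
      constructor
      rintro ⟨a, ⟨ha0, _, haz⟩, _, _⟩ ⟨b, ⟨hb0, _, hbz⟩, _, _⟩
      apply Subtype.ext
      funext i
      show a i = b i
      cases i with
      | zero => rw [ha0, hb0]
      | succ i => rw [haz (i+1) (by omega), hbz (i+1) (by omega)]
    exact Nat.card_eq_one_iff_unique.mpr ⟨hsub, this⟩
  · rw [if_neg hx]
    have : IsEmpty {a : ℕ → ℕ // Walk 0 a ∧ a 0 = x ∧ ∀ i, a i ≤ t} := by
      constructor
      rintro ⟨a, ⟨ha0, _, _⟩, hax, _⟩
      exact hx (by rw [← hax, ha0])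
    exact Nat.card_of_isEmpty

lemma Ncount_succ (t L x : ℕ) (hxt : x ≤ t) :
    Ncount t (L+1) x = Ncount t L (x+1) + (if 1 ≤ x then Ncount t L (x-1) else 0) := by
  classical
  have hP : ∀ b, (Walk L b ∧ b L = x + 1 ∧ ∀ i, b i ≤ t) → Walk L b := fun _ h => h.1
  have hQ : ∀ b, (Walk L b ∧ (1 ≤ x ∧ b L + 1 = x) ∧ ∀ i, b i ≤ t) → Walk L b := fun _ h => h.1
  haveI f1 := finite_of_walk L _ hP
  haveI f2 := finite_of_walk L _ hQ
  have excl : ∀ b : ℕ → ℕ, (Walk L b ∧ b L = x + 1 ∧ ∀ i, b i ≤ t) →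
      (Walk L b ∧ (1 ≤ x ∧ b L + 1 = x) ∧ ∀ i, b i ≤ t) → False := by
    rintro b ⟨_, h1, _⟩ ⟨_, ⟨_, h2⟩, _⟩; omega
  rw [Ncount, Nat.card_congr (stepEquiv t L x hxt), Nat.card_congr (orEquiv _ _ excl),
    Nat.card_sum]
  congr 1
  by_cases hx1 : 1 ≤ x
  · rw [if_pos hx1]
    apply Nat.card_congr
    apply Equiv.subtypeEquivRight
    intro b
    constructor
    · rintro ⟨hw, ⟨_, h2⟩, hb⟩; exact ⟨hw, by omega, hb⟩
    · rintro ⟨hw, h2, hb⟩; exact ⟨hw, ⟨hx1, by omega⟩, hb⟩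
  · rw [if_neg hx1]
    have : IsEmpty {b : ℕ → ℕ // Walk L b ∧ (1 ≤ x ∧ b L + 1 = x) ∧ ∀ i, b i ≤ t} := by
      constructor; rintro ⟨b, _, ⟨h1, _⟩, _⟩; exact hx1 h1
    exact Nat.card_of_isEmpty

lemma Ncount_gt (t L x : ℕ) (hxt : t < x) : Ncount t L x = 0 := by
  have : IsEmpty {a : ℕ → ℕ // Walk L a ∧ a L = x ∧ ∀ i, a i ≤ t} := by
    constructor
    rintro ⟨a, _, hax, hbd⟩
    have := hbd L
    omega
  exact Nat.card_of_isEmpty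

lemma Ncount_eq_Wt (t : ℕ) : ∀ (L x : ℕ), Ncount t L x = Wt t L (x:ℤ) := by
  intro L
  induction L with
  | zero =>
      intro x
      rw [Ncount_zero]
      simp only [Wt]
      by_cases hx : x = 0
      · subst hx; norm_num
      · rw [if_neg hx, if_neg (by exact_mod_cast hx)]
  | succ L ih =>
      intro x
      by_cases hxt : x ≤ t
      · rw [Ncount_succ t L x hxt]
        simp only [Wt]
        rw [if_pos (show (0:ℤ) ≤ (x:ℤ) ∧ (x:ℤ) ≤ (t:ℤ) from ⟨by positivity, by exact_mod_cast hxt⟩)]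
        by_cases hx1 : 1 ≤ x
        · rw [if_pos hx1, ih (x+1), ih (x-1)]
          have e1 : ((x:ℤ)) - 1 = ((x-1 : ℕ) : ℤ) := by omega
          have e2 : ((x:ℤ)) + 1 = ((x+1 : ℕ) : ℤ) := by push_cast; ring
          rw [e1, e2]
          omega
        · have hx0 : x = 0 := by omega
          subst hx0
          rw [if_neg hx1, ih 1]
          rw [Wt_out t L (((0:ℕ):ℤ) - 1) (by omega)]
          norm_num
      · rw [Ncount_gt t (L+1) x (by omega)]
        simp only [Wt]
        rw [if_neg (by push_cast; omega)]

lemma dyck_iff_walk {n : ℕ} (hn : 1 ≤ n) (a : ℕ → ℕ) :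
    IsDyckSeq n a ↔ Walk (2*n) a ∧ a (2*n) = 0 := by
  constructor
  · rintro ⟨h1, h2, hs, h0, hz⟩
    refine ⟨⟨h0, ?_, hz⟩, h2⟩
    intro i hi
    match i with
    | 0 => left; rw [h1, h0]
    | (i+1) => exact hs (i+1) (by omega) hi
  · rintro ⟨⟨h0, hs, hz⟩, h2⟩
    have h1 : a 1 = 1 := by
      rcases hs 0 (by omega) with h | h
      · rw [h, h0]
      · omega
    exact ⟨h1, h2, fun i _ hi => hs i hi, h0, hz⟩

lemma mul_lb {j K : ℤ} (hK : 0 < K) (hj : 1 ≤ j) : 2*K ≤ 2*j*K := by nlinarith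
lemma mul_ub {j K : ℤ} (hK : 0 < K) (hj : j ≤ -1) : 2*j*K ≤ -2*K := by nlinarith

/-- Evaluation of the wide-strip sum: only `j = 0` contributes. -/
lemma sum_big (n : ℕ) (hn : 1 ≤ n) :
    ∑ j ∈ Icc (-((2*n:ℕ):ℤ)) ((2*n:ℕ):ℤ),
      ((W (2*n) ((0:ℤ) + 2*j*(((2*n:ℕ):ℤ)+2)) : ℤ) - (W (2*n) (2*j*(((2*n:ℕ):ℤ)+2) - 2 - 0) : ℤ))
    = (chooseZ (2*n) ((n:ℤ)) : ℤ) - (chooseZ (2*n) ((n:ℤ)-1) : ℤ) := by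
  rw [Finset.sum_eq_single_of_mem 0 (by simp only [Finset.mem_Icc]; omega)]
  · have e1 : (0:ℤ) + 2*0*(((2*n:ℕ):ℤ)+2) = 2*(0:ℤ) := by ring
    have e2 : 2*(0:ℤ)*(((2*n:ℕ):ℤ)+2) - 2 - 0 = 2*(-1:ℤ) := by ring
    rw [e1, e2, W_even, W_even, show (n:ℤ) + -1 = (n:ℤ) - 1 by ring]
    norm_num
  · intro j hj hj0
    simp only [Finset.mem_Icc] at hj
    have hK : (0:ℤ) < ((2*n:ℕ):ℤ) + 2 := by positivity
    have habs : ∀ y : ℤ, y = (0:ℤ) + 2*j*(((2*n:ℕ):ℤ)+2) ∨ y = 2*j*(((2*n:ℕ):ℤ)+2) - 2 - 0 →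
        (((2*n:ℕ)):ℤ) < |y| := by
      intro y hy
      rcases lt_or_gt_of_ne hj0 with h | h
      · have := mul_ub hK (by omega : j ≤ -1)
        apply lt_abs.mpr
        right
        rcases hy with rfl | rfl <;> push_cast <;> nlinarith
      · have := mul_lb hK (by omega : 1 ≤ j)
        apply lt_abs.mpr
        left
        rcases hy with rfl | rfl <;> push_cast <;> nlinarith
    rw [W_eq_zero _ _ (habs _ (Or.inl rfl)), W_eq_zero _ _ (habs _ (Or.inr rfl))]
    norm_num

/-- Evaluation of the narrow-strip sum in terms of `chooseZ`. -/
lemma sum_narrow (n k : ℕ) (hk : 1 ≤ k) :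
    ∑ j ∈ Icc (-((2*n:ℕ):ℤ)) ((2*n:ℕ):ℤ),
      ((W (2*n) ((0:ℤ) + 2*j*(((k-1:ℕ):ℤ)+2)) : ℤ) - (W (2*n) (2*j*(((k-1:ℕ):ℤ)+2) - 2 - 0) : ℤ))
    = ∑ j ∈ Icc (-((2*n:ℕ):ℤ)) ((2*n:ℕ):ℤ),
      ((chooseZ (2*n) ((n:ℤ) + j*((k:ℤ)+1)) : ℤ) - (chooseZ (2*n) ((n:ℤ) - 1 + j*((k:ℤ)+1)) : ℤ)) := by
  apply Finset.sum_congr rfl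
  intro j _
  have hc : ((k-1:ℕ):ℤ) + 2 = (k:ℤ) + 1 := by omega
  rw [hc]
  have e1 : (0:ℤ) + 2*j*((k:ℤ)+1) = 2*(j*((k:ℤ)+1)) := by ring
  have e2 : 2*j*((k:ℤ)+1) - 2 - 0 = 2*(j*((k:ℤ)+1) - 1) := by ring
  rw [e1, e2, W_even, W_even]
  have e3 : (n:ℤ) + (j*((k:ℤ)+1) - 1) = (n:ℤ) - 1 + j*((k:ℤ)+1) := by ring
  rw [e3]

lemma sum_split (N : ℤ) (hN : 1 ≤ N) (F : ℤ → ℤ) :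
    ∑ j ∈ Icc (-N) N, F j = (∑ j ∈ Icc (-N) (-1), F j) + F 0 + ∑ j ∈ Icc 1 N, F j := by
  have e1 : Icc (-N) N = Icc (-N) (-1) ∪ Icc 0 N := by
    ext z; simp only [Finset.mem_union, Finset.mem_Icc]; omega
  have hd : Disjoint (Icc (-N) (-1)) (Icc (0:ℤ) N) := by
    rw [Finset.disjoint_left]
    intro z hz hz'
    simp only [Finset.mem_Icc] at *
    omega
  rw [e1, Finset.sum_union hd]
  have e2 : Icc (0:ℤ) N = insert 0 (Icc 1 N) := by
    ext z; simp only [Finset.mem_insert, Finset.mem_Icc]; omega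
  rw [e2, Finset.sum_insert (by simp only [Finset.mem_Icc]; omega)]
  ring

lemma sum_neg_reindex (N : ℤ) (F : ℤ → ℤ) :
    ∑ j ∈ Icc (-N) (-1), F j = ∑ j ∈ Icc 1 N, F (-j) := by
  apply Finset.sum_nbij' (fun j => -j) (fun j => -j)
  · intro a ha; simp only [Finset.mem_Icc] at *; omega
  · intro a ha; simp only [Finset.mem_Icc] at *; omega
  · intro a _; ring
  · intro a _; ring
  · intro a _; rw [neg_neg]

lemma final_sum (n k : ℕ) (hn : 1 ≤ n) (hk : 1 ≤ k) :
    (chooseZ (2*n) ((n:ℤ)) : ℤ) - (chooseZ (2*n) ((n:ℤ)-1) : ℤ)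
      - ∑ j ∈ Icc (-((2*n:ℕ):ℤ)) ((2*n:ℕ):ℤ),
        ((chooseZ (2*n) ((n:ℤ) + j*((k:ℤ)+1)) : ℤ) - (chooseZ (2*n) ((n:ℤ) - 1 + j*((k:ℤ)+1)) : ℤ))
    = ∑ j ∈ Finset.Icc 1 (n:ℤ),
      ((chooseZ (2*n) ((n : ℤ) + 1 - j*((k:ℤ)+1)) : ℤ)
        - 2 * chooseZ (2*n) ((n : ℤ) - j*((k:ℤ)+1))
        + chooseZ (2*n) ((n : ℤ) - 1 - j*((k:ℤ)+1))) := by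
  have hsub : ((2*n:ℕ):ℤ) = 2*(n:ℤ) := by push_cast; ring
  rw [hsub, sum_split (2*(n:ℤ)) (by omega) _, sum_neg_reindex]
  rw [show (n:ℤ) + 0*((k:ℤ)+1) = (n:ℤ) by ring, show (n:ℤ) - 1 + 0*((k:ℤ)+1) = (n:ℤ) - 1 by ring]
  have hext : ∑ j ∈ Finset.Icc 1 (n:ℤ),
      ((chooseZ (2*n) ((n : ℤ) + 1 - j*((k:ℤ)+1)) : ℤ)
        - 2 * chooseZ (2*n) ((n : ℤ) - j*((k:ℤ)+1))
        + chooseZ (2*n) ((n : ℤ) - 1 - j*((k:ℤ)+1)))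
      = ∑ j ∈ Finset.Icc 1 (2*(n:ℤ)),
      ((chooseZ (2*n) ((n : ℤ) + 1 - j*((k:ℤ)+1)) : ℤ)
        - 2 * chooseZ (2*n) ((n : ℤ) - j*((k:ℤ)+1))
        + chooseZ (2*n) ((n : ℤ) - 1 - j*((k:ℤ)+1))) := by
    apply Finset.sum_subset (Finset.Icc_subset_Icc le_rfl (by omega))
    intro j hj hnj
    simp only [Finset.mem_Icc] at hj hnj
    have hjn : (n:ℤ) + 1 ≤ j := by omega
    have hjk : 2*((n:ℤ)+1) ≤ j*((k:ℤ)+1) := by nlinarith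
    rw [chooseZ_neg _ (by omega), chooseZ_neg _ (by omega), chooseZ_neg _ (by omega)]
    norm_num
  rw [hext]
  have hterm : ∀ j ∈ Finset.Icc (1:ℤ) (2*(n:ℤ)),
      ((chooseZ (2*n) ((n:ℤ) + (-j)*((k:ℤ)+1)) : ℤ) - (chooseZ (2*n) ((n:ℤ) - 1 + (-j)*((k:ℤ)+1)) : ℤ))
      = (chooseZ (2*n) ((n:ℤ) - j*((k:ℤ)+1)) : ℤ) - (chooseZ (2*n) ((n:ℤ) - 1 - j*((k:ℤ)+1)) : ℤ) := by
    intro j _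
    rw [show (n:ℤ) + (-j)*((k:ℤ)+1) = (n:ℤ) - j*((k:ℤ)+1) by ring,
        show (n:ℤ) - 1 + (-j)*((k:ℤ)+1) = (n:ℤ) - 1 - j*((k:ℤ)+1) by ring]
  rw [Finset.sum_congr rfl hterm]
  have hterm2 : ∀ j ∈ Finset.Icc (1:ℤ) (2*(n:ℤ)),
      ((chooseZ (2*n) ((n:ℤ) + j*((k:ℤ)+1)) : ℤ) - (chooseZ (2*n) ((n:ℤ) - 1 + j*((k:ℤ)+1)) : ℤ))
      = (chooseZ (2*n) ((n:ℤ) - j*((k:ℤ)+1)) : ℤ) - (chooseZ (2*n) ((n:ℤ) + 1 - j*((k:ℤ)+1)) : ℤ) := by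
    intro j _
    have s1 : (chooseZ (2*n) ((n:ℤ) + j*((k:ℤ)+1)) : ℤ) = (chooseZ (2*n) ((n:ℤ) - j*((k:ℤ)+1)) : ℤ) := by
      exact_mod_cast congrArg (Nat.cast (R := ℤ)) (chooseZ_symm n (j*((k:ℤ)+1)))
    have s2 : (chooseZ (2*n) ((n:ℤ) - 1 + j*((k:ℤ)+1)) : ℤ)
        = (chooseZ (2*n) ((n:ℤ) + 1 - j*((k:ℤ)+1)) : ℤ) := by
      have h := chooseZ_symm n (j*((k:ℤ)+1) - 1)
      rw [show (n:ℤ) + (j*((k:ℤ)+1) - 1) = (n:ℤ) - 1 + j*((k:ℤ)+1) by ring,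
          show (n:ℤ) - (j*((k:ℤ)+1) - 1) = (n:ℤ) + 1 - j*((k:ℤ)+1) by ring] at h
      exact_mod_cast congrArg (Nat.cast (R := ℤ)) h
    rw [s1, s2]
  rw [Finset.sum_congr rfl hterm2, Finset.sum_sub_distrib, Finset.sum_sub_distrib]
  have expand : ∀ j ∈ Finset.Icc (1:ℤ) (2*(n:ℤ)),
      ((chooseZ (2*n) ((n : ℤ) + 1 - j*((k:ℤ)+1)) : ℤ)
        - 2 * chooseZ (2*n) ((n : ℤ) - j*((k:ℤ)+1))
        + chooseZ (2*n) ((n : ℤ) - 1 - j*((k:ℤ)+1)))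
      = ((chooseZ (2*n) ((n : ℤ) + 1 - j*((k:ℤ)+1)) : ℤ) - chooseZ (2*n) ((n : ℤ) - j*((k:ℤ)+1)))
        + ((chooseZ (2*n) ((n : ℤ) - 1 - j*((k:ℤ)+1)) : ℤ) - chooseZ (2*n) ((n : ℤ) - j*((k:ℤ)+1))) := by
    intro j _; ring
  rw [Finset.sum_congr rfl expand, Finset.sum_add_distrib, Finset.sum_sub_distrib,
    Finset.sum_sub_distrib]
  ring

lemma sum_castIcc (N : ℕ) (F : ℤ → ℤ) :
    ∑ j ∈ Finset.Icc (1:ℤ) (N:ℤ), F j = ∑ j ∈ Finset.Icc (1:ℕ) N, F (j:ℤ) := by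
  apply Finset.sum_nbij' (i := fun j : ℤ => j.toNat) (j := fun j : ℕ => (j:ℤ))
  · intro a ha; simp only [Finset.mem_Icc] at *; omega
  · intro a ha; simp only [Finset.mem_Icc] at *; omega
  · intro a ha; simp only [Finset.mem_Icc] at ha; omega
  · intro a ha; simp only [Finset.mem_Icc] at ha; omega
  · intro a ha
    simp only [Finset.mem_Icc] at ha
    congr 1
    omega


theorem stmt10 (n k : ℕ) (hn : 1 ≤ n) (hk : 1 ≤ k) :
    (B n k : ℤ) = ∑ j ∈ Finset.Icc 1 n,
      ((chooseZ (2*n) ((n : ℤ) + 1 - j*(k+1)) : ℤ)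
        - 2 * chooseZ (2*n) ((n : ℤ) - j*(k+1))
        + chooseZ (2*n) ((n : ℤ) - 1 - j*(k+1))) := by
  classical
  have hBdef : B n k = Nat.card {a : ℕ → ℕ // IsDyckSeq n a ∧ ∃ i, k ≤ a i} := by
    rw [B, if_neg (by omega)]
  have hsplit : Nat.card {a : ℕ → ℕ // IsDyckSeq n a}
      = Nat.card {a : ℕ → ℕ // IsDyckSeq n a ∧ (∀ i, a i ≤ k-1)}
      + Nat.card {a : ℕ → ℕ // IsDyckSeq n a ∧ ∃ i, k ≤ a i} := by
    have hiff : ∀ a : ℕ → ℕ, IsDyckSeq n a ↔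
        ((IsDyckSeq n a ∧ (∀ i, a i ≤ k-1)) ∨ (IsDyckSeq n a ∧ ∃ i, k ≤ a i)) := by
      intro a
      constructor
      · intro h
        by_cases he : ∃ i, k ≤ a i
        · exact Or.inr ⟨h, he⟩
        · push_neg at he
          exact Or.inl ⟨h, fun i => Nat.le_pred_of_lt (he i)⟩
      · rintro (⟨h, _⟩ | ⟨h, _⟩) <;> exact h
    have hexcl : ∀ a : ℕ → ℕ, (IsDyckSeq n a ∧ (∀ i, a i ≤ k-1)) →
        (IsDyckSeq n a ∧ ∃ i, k ≤ a i) → False := by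
      rintro a ⟨_, hb⟩ ⟨_, i, hi⟩
      exact absurd hi (Nat.not_le.mpr (lt_of_le_of_lt (hb i) (Nat.sub_lt hk Nat.one_pos)))
    rw [Nat.card_congr (Equiv.subtypeEquivRight hiff), Nat.card_congr (orEquiv _ _ hexcl),
      @Nat.card_sum _ _ (finite_of_walk (2*n) _ (fun a h => ((dyck_iff_walk hn a).1 h.1).1))
        (finite_of_walk (2*n) _ (fun a h => ((dyck_iff_walk hn a).1 h.1).1))]
  have hc1 : Nat.card {a : ℕ → ℕ // IsDyckSeq n a ∧ (∀ i, a i ≤ k-1)} = Ncount (k-1) (2*n) 0 :=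
    Nat.card_congr (Equiv.subtypeEquivRight (fun a => by
      rw [dyck_iff_walk hn a]; tauto))
  have hc2 : Nat.card {a : ℕ → ℕ // IsDyckSeq n a} = Ncount (2*n) (2*n) 0 :=
    Nat.card_congr (Equiv.subtypeEquivRight (fun a => by
      rw [dyck_iff_walk hn a]
      constructor
      · rintro ⟨hw, h0⟩
        refine ⟨hw, h0, fun i => ?_⟩
        rcases le_or_gt i (2*n) with hi | hi
        · exact le_trans (walk_le hw i) hi
        · rw [hw.2.2 i hi]; exact Nat.zero_le _
      · rintro ⟨hw, h0, _⟩; exact ⟨hw, h0⟩))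
  have hmain : (B n k : ℤ) = (Ncount (2*n) (2*n) 0 : ℤ) - (Ncount (k-1) (2*n) 0 : ℤ) := by
    rw [hBdef]
    rw [hc1, hc2] at hsplit
    rw [hsplit]
    push_cast
    ring
  rw [hmain, Ncount_eq_Wt, Ncount_eq_Wt, Nat.cast_zero]
  rw [strip (2*n) (2*n) (2*n) le_rfl 0 le_rfl (by positivity),
      strip (k-1) (2*n) (2*n) le_rfl 0 le_rfl (by positivity)]
  rw [sum_big n hn, sum_narrow n k hk]
  have hfs := final_sum n k hn hk
  rw [sum_castIcc n _] at hfs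
  exact hfs
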